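/- Let f : ℝ → ℂ be twice continuously differentiable with f, f' and f'' integrable on ℝ, and let k be a nonzero real number. Then for every ξ ∈ ℝ: | ∫_{−∞}^ξ f(ζ) e^{i k ζ} dζ + (i/k) f(ξ) e^{i k ξ} | ≤ (1/k²) ( |f'(ξ)| + ∫_{−∞}^ξ |f''(ζ)| dζ ). -/

import Mathlib

open MeasureTheory Real Complex

private lemma expIk_hasDerivAt (k : ℝ) (ζ : ℝ) :
    HasDerivAt (fun ζ : ℝ => Complex.exp (Complex.I * (k * ζ : ℝ)))
      (Complex.I * k * Complex.exp (Complex.I * (k * ζ : ℝ))) ζ := by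
  have h1 : HasDerivAt (fun ζ : ℝ => (k * ζ : ℝ)) k ζ := by
    simpa using (hasDerivAt_id ζ).const_mul k
  have h2 : HasDerivAt (fun ζ : ℝ => ((k * ζ : ℝ) : ℂ)) (k : ℂ) ζ := h1.ofReal_comp
  have h3 := (h2.const_mul Complex.I).cexp
  simpa [mul_comm, mul_assoc, mul_left_comm] using h3

private lemma expIk_abs (k ζ : ℝ) :
    ‖Complex.exp (Complex.I * (k * ζ : ℝ))‖ = 1 := by
  rw [Complex.norm_exp]
  simp

private lemma integrable_mul_expIk {g : ℝ → ℂ} (hg : Integrable g) (k : ℝ) :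
    Integrable (fun ζ : ℝ => g ζ * Complex.exp (Complex.I * (k * ζ : ℝ))) := by
  have hc : Continuous (fun ζ : ℝ => Complex.exp (Complex.I * (k * ζ : ℝ))) := by
    fun_prop
  have := hg.bdd_mul hc.aestronglyMeasurable (c := 1) (Filter.Eventually.of_forall fun ζ => by
    simp only [expIk_abs]; exact le_rfl)
  simpa [mul_comm] using this

/-- One integration by parts on `(-∞, ξ]`. -/
private lemma ibp_step {g : ℝ → ℂ} (hg : ContDiff ℝ 1 g)
    (hg0 : Integrable g) (hg1 : Integrable (deriv g)) (k : ℝ) (hk : k ≠ 0) (ξ : ℝ) :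
    (∫ ζ in Set.Iic ξ, g ζ * Complex.exp (Complex.I * (k * ζ : ℝ)))
      = -(Complex.I / k) * g ξ * Complex.exp (Complex.I * (k * ξ : ℝ))
        + (Complex.I / k) * ∫ ζ in Set.Iic ξ, deriv g ζ * Complex.exp (Complex.I * (k * ζ : ℝ)) := by
  set E : ℝ → ℂ := fun ζ => Complex.exp (Complex.I * (k * ζ : ℝ)) with hE
  have hgd : ∀ x : ℝ, HasDerivAt g (deriv g x) x := fun x =>
    (hg.differentiable one_ne_zero x).hasDerivAt
  have hderiv : ∀ x : ℝ, HasDerivAt (fun ζ => g ζ * E ζ)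
      (deriv g x * E x + Complex.I * k * (g x * E x)) x := by
    intro x
    have : HasDerivAt (fun ζ => g ζ * E ζ)
        (deriv g x * E x + g x * (Complex.I * k * E x)) x :=
      (hgd x).mul (expIk_hasDerivAt k x)
    convert this using 1
    ring
  have hint0 : Integrable (fun ζ => g ζ * E ζ) := integrable_mul_expIk hg0 k
  have hint1 : Integrable (fun ζ => deriv g ζ * E ζ) := integrable_mul_expIk hg1 k
  have hint' : Integrable (fun x => deriv g x * E x + Complex.I * k * (g x * E x)) :=
    hint1.add (hint0.const_mul _)
  have htend : Filter.Tendsto (fun ζ => g ζ * E ζ) Filter.atBot (nhds 0) :=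
    tendsto_zero_of_hasDerivAt_of_integrableOn_Iic (a := ξ)
      (fun x _ => hderiv x) hint'.integrableOn hint0.integrableOn
  have hftc : (∫ x in Set.Iic ξ, (deriv g x * E x + Complex.I * k * (g x * E x)))
      = g ξ * E ξ - 0 :=
    MeasureTheory.integral_Iic_of_hasDerivAt_of_tendsto' (fun x _ => hderiv x)
      hint'.integrableOn htend
  rw [MeasureTheory.integral_add hint1.integrableOn (hint0.const_mul _).integrableOn,
    MeasureTheory.integral_const_mul, sub_zero] at hftc
  have hknz : (k : ℂ) ≠ 0 := Complex.ofReal_ne_zero.mpr hk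
  have key : (k : ℂ) * (∫ ζ in Set.Iic ξ, g ζ * E ζ)
      = -Complex.I * (g ξ * E ξ) + Complex.I * ∫ x in Set.Iic ξ, deriv g x * E x := by
    linear_combination (-Complex.I) * hftc
      + ((k : ℂ) * ∫ ζ in Set.Iic ξ, g ζ * E ζ) * Complex.I_sq
  have : (∫ ζ in Set.Iic ξ, g ζ * E ζ)
      = ((k : ℂ) * (∫ ζ in Set.Iic ξ, g ζ * E ζ)) / k := by field_simp
  rw [this, key]
  ring

theorem oscillatory_integral_remainder_bound
    (f : ℝ → ℂ) (hf : ContDiff ℝ 2 f)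
    (hf0 : Integrable f) (hf1 : Integrable (deriv f))
    (hf2 : Integrable (deriv (deriv f)))
    (k : ℝ) (hk : k ≠ 0) (ξ : ℝ) :
    ‖((∫ ζ in Set.Iic ξ, f ζ * Complex.exp (Complex.I * (k * ζ : ℝ)))
        + (Complex.I / (k : ℂ)) * f ξ * Complex.exp (Complex.I * (k * ξ : ℝ)))‖
      ≤ (1 / k^2) *
        (‖deriv f ξ‖
          + ∫ ζ in Set.Iic ξ, ‖deriv (deriv f) ζ‖) := by
  have hf' : ContDiff ℝ 1 (deriv f) :=
    (contDiff_succ_iff_deriv.mp (show ContDiff ℝ (1 + 1) f by exact_mod_cast hf)).2.2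
  have h1 := ibp_step (hf.of_le one_le_two) hf0 hf1 k hk ξ
  have h2 := ibp_step hf' hf1 hf2 k hk ξ
  have hknz : (k : ℂ) ≠ 0 := Complex.ofReal_ne_zero.mpr hk
  have hX : (∫ ζ in Set.Iic ξ, f ζ * Complex.exp (Complex.I * (k * ζ : ℝ)))
        + (Complex.I / (k : ℂ)) * f ξ * Complex.exp (Complex.I * (k * ξ : ℝ))
      = (1 / (k : ℂ)^2) * (deriv f ξ * Complex.exp (Complex.I * (k * ξ : ℝ))
          - ∫ ζ in Set.Iic ξ, deriv (deriv f) ζ * Complex.exp (Complex.I * (k * ζ : ℝ))) := by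
    linear_combination h1 + (Complex.I / (k : ℂ)) * h2
      + (((∫ ζ in Set.Iic ξ, deriv (deriv f) ζ * Complex.exp (Complex.I * (k * ζ : ℝ)))
          - deriv f ξ * Complex.exp (Complex.I * (k * ξ : ℝ))) / (k : ℂ)^2) * Complex.I_sq
  rw [hX, norm_mul]
  have habs1 : ‖(1 / (k : ℂ)^2)‖ = 1 / k^2 := by
    rw [norm_div, norm_pow]
    simp [_root_.sq_abs]
  rw [habs1]
  have hk2 : (0:ℝ) ≤ 1 / k^2 := by positivity
  refine mul_le_mul_of_nonneg_left ?_ hk2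
  refine le_trans (norm_sub_le _ _) ?_
  have hterm1 : ‖deriv f ξ * Complex.exp (Complex.I * (k * ξ : ℝ))‖
      = ‖deriv f ξ‖ := by
    rw [norm_mul, expIk_abs, mul_one]
  rw [hterm1]
  refine add_le_add le_rfl ?_
  calc ‖∫ ζ in Set.Iic ξ, deriv (deriv f) ζ * Complex.exp (Complex.I * (k * ζ : ℝ))‖
      ≤ ∫ ζ in Set.Iic ξ, ‖deriv (deriv f) ζ * Complex.exp (Complex.I * (k * ζ : ℝ))‖ := by
        exact norm_integral_le_integral_norm _
    _ = ∫ ζ in Set.Iic ξ, ‖deriv (deriv f) ζ‖ := by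
        refine integral_congr_ae (Filter.Eventually.of_forall fun ζ => ?_)
        simp only [norm_mul]
        rw [expIk_abs, mul_one]
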